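/- arXiv:2602.17392 — 2 statements merged into one kernel-verified Lean document; each statement's English description precedes it below -/
import Mathlib

section
/- Dominance of the tightened cut (Theorem 2 of the paper): let (y′,z*) be a bilevel feasible pair, let Φ_tail be the tailored value-function bound built from (y′,z*), and let Φ_tight be the tightened value-function bound of z*. Then Φ_tight(y) ≥ Φ_tail(y) for every location schedule y ∈ 𝒮; that is, the tightened value-function cut dominates the tailored value-function cut for the follower problem. -/
open Finset

attribute [local instance] Classical.propDecidable

/-- Data of an instance of the competitive dynamic facility location problem under
cumulative customer demand (CDFLP-CCD).  `pref j a b` means that customer `j`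
strictly prefers option `a` over option `b`, where `none` is the no-service option. -/
structure CDFLP (I J : Type*) where
  /-- number of time periods; the period set is `{1, …, T}` -/
  T : ℕ
  /-- spawning demand of customer `j` at period `t` -/
  d : J → ℕ → ℝ
  /-- reward per unit of demand captured at location `i` -/
  r : I → ℝ
  /-- splitting factor -/
  ρ : ℝ
  /-- strict preference: `pref j a b` means `a ≻_j b` -/
  pref : J → Option I → Option I → Prop

namespace CDFLP

variable {I J : Type*} [Fintype I] [Fintype J]

/-- The model hypotheses: `T ≥ 1`, nonnegative demands and rewards, `ρ ∈ [0,1]`,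
and every `≻_j` is a strict linear order on `I ∪ {0}`. -/
def Valid (P : CDFLP I J) : Prop :=
  1 ≤ P.T ∧ (∀ j t, 0 ≤ P.d j t) ∧ (∀ i, 0 ≤ P.r i) ∧
    0 ≤ P.ρ ∧ P.ρ ≤ 1 ∧ ∀ j, IsStrictTotalOrder (Option I) (P.pref j)

/-- The locations considered by customer `j`, i.e. those preferred over no service. -/
noncomputable def considered (P : CDFLP I J) (j : J) : Finset I :=
  Finset.univ.filter fun i => P.pref j (some i) none

/-- `w` is a location schedule: on the planning horizon it is `{0,1}`-valued and opens
at most one facility per period. -/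
def IsSched (P : CDFLP I J) (w : I → ℕ → ℝ) : Prop :=
  ∀ t, 1 ≤ t → t ≤ P.T → (∀ i, w i t = 0 ∨ w i t = 1) ∧ (∑ i, w i t) ≤ 1

/-- `A_j^t(y,z)`: considered locations of `j` opened by the leader or the follower
at period `t`. -/
noncomputable def captureSet (P : CDFLP I J) (y z : I → ℕ → ℝ) (j : J) (t : ℕ) : Finset I :=
  Finset.univ.filter fun i => P.pref j (some i) none ∧ (y i t = 1 ∨ z i t = 1)

/-- `t ∈ 𝒯` is a capture period of customer `j`. -/
def IsCapture (P : CDFLP I J) (y z : I → ℕ → ℝ) (j : J) (t : ℕ) : Prop :=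
  1 ≤ t ∧ t ≤ P.T ∧ (P.captureSet y z j t).Nonempty

/-- `i` is the `≻_j`-greatest element of the capture set `A_j^t(y,z)`,
i.e. `i = i*(j,t)`. -/
def IsPatron (P : CDFLP I J) (y z : I → ℕ → ℝ) (j : J) (t : ℕ) (i : I) : Prop :=
  i ∈ P.captureSet y z j t ∧
    ∀ k ∈ P.captureSet y z j t, k ≠ i → P.pref j (some i) (some k)

/-- The greatest capture period of `j` smaller than `t` (`0` if there is none). -/
noncomputable def lastCap (P : CDFLP I J) (y z : I → ℕ → ℝ) (j : J) (t : ℕ) : ℕ :=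
  ((Finset.Ico 1 t).filter fun s => P.IsCapture y z j s).sup id

/-- `D_j^{ℓt}`: demand of customer `j` spawned in periods `ℓ+1, …, t`. -/
noncomputable def D (P : CDFLP I J) (j : J) (ℓ t : ℕ) : ℝ :=
  ∑ s ∈ Finset.Icc (ℓ + 1) t, P.d j s

/-- `v_{ij}^{ℓt}(y,z)`: fraction of `D_j^{ℓt}` captured by the follower through
location `i` at period `t`. -/
noncomputable def v (P : CDFLP I J) (y z : I → ℕ → ℝ) (j : J) (i : I) (ℓ t : ℕ) : ℝ :=
  if P.IsCapture y z j t ∧ ℓ = P.lastCap y z j t ∧ P.IsPatron y z j t i ∧ z i t = 1 then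
    1 - P.ρ * y i t
  else 0

/-- `u_{ij}^{ℓt}(y,z)`: fraction of `D_j^{ℓt}` captured by the leader through
location `i` at period `t`. -/
noncomputable def u (P : CDFLP I J) (y z : I → ℕ → ℝ) (j : J) (i : I) (ℓ t : ℕ) : ℝ :=
  if P.IsCapture y z j t ∧ ℓ = P.lastCap y z j t ∧ P.IsPatron y z j t i ∧ y i t = 1 then
    1 - (1 - P.ρ) * z i t
  else 0

/-- The follower's profit `π^F(y,z)`. -/
noncomputable def profitF (P : CDFLP I J) (y z : I → ℕ → ℝ) : ℝ :=
  ∑ t ∈ Finset.Icc 1 P.T, ∑ ℓ ∈ Finset.range t, ∑ j : J, ∑ i ∈ P.considered j,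
    P.r i * P.D j ℓ t * P.v y z j i ℓ t

/-- The leader's profit `π^L(y,z)`. -/
noncomputable def profitL (P : CDFLP I J) (y z : I → ℕ → ℝ) : ℝ :=
  ∑ t ∈ Finset.Icc 1 P.T, ∑ ℓ ∈ Finset.range t, ∑ j : J, ∑ i ∈ P.considered j,
    P.r i * P.D j ℓ t * P.u y z j i ℓ t

/-- `(y,z)` is bilevel feasible: both are schedules and `z` is an optimal
reaction of the follower against `y`. -/
def BilevelFeasible (P : CDFLP I J) (y z : I → ℕ → ℝ) : Prop :=
  P.IsSched y ∧ P.IsSched z ∧ ∀ z', P.IsSched z' → P.profitF y z' ≤ P.profitF y z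


/-- The tailored value-function bound built from the pair `(y', zs)`, evaluated at a
leader schedule `y`. -/
noncomputable def tailoredBound (P : CDFLP I J) (y' zs y : I → ℕ → ℝ) : ℝ :=
  ∑ t ∈ Finset.Icc 1 P.T, ∑ ℓ ∈ Finset.range t, ∑ j : J, ∑ i ∈ P.considered j,
    P.r i * P.D j ℓ t * P.v y' zs j i ℓ t *
      (1 - (∑ k ∈ P.considered j, ∑ s ∈ Finset.Ioo ℓ t, y k s)
         - (∑ k ∈ Finset.univ.filter fun k => P.pref j (some k) (some i), y k t)
         - (if P.v y' zs j i ℓ t = 1 ∧ 0 < P.ρ then 1 else 0) * y i t)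

/-- `o_{ij}^{st}(y)`: the maximum of the `y`-values at locations/periods through which
the leader can intercept the demand portion spawned at period `s` and captured at
period `t` through location `i`; the maximum of an empty set is taken as `0`. -/
noncomputable def oMax (P : CDFLP I J) (y : I → ℕ → ℝ) (j : J) (i : I) (s t : ℕ) : ℝ :=
  max ((Finset.Ico s t ×ˢ P.considered j).fold max 0 fun p => y p.2 p.1)
      ((Finset.univ.filter fun k => P.pref j (some k) (some i)).fold max 0 fun k => y k t)

/-- The tightened value-function bound of the follower schedule `zs`, evaluated at a
leader schedule `y` (the `v`-values are taken against the empty leader schedule). -/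
noncomputable def tightenedBound (P : CDFLP I J) (zs y : I → ℕ → ℝ) : ℝ :=
  ∑ t ∈ Finset.Icc 1 P.T, ∑ ℓ ∈ Finset.range t, ∑ j : J, ∑ i ∈ P.considered j,
    P.r i * P.v (fun _ _ => 0) zs j i ℓ t *
      (P.D j ℓ t - (∑ s ∈ Finset.Icc (ℓ + 1) t, P.d j s * P.oMax y j i s t)
        - P.ρ * y i t * ∑ s ∈ Finset.Icc (ℓ + 1) t, P.d j s * (1 - P.oMax y j i s t))

/-- The core scalar inequality behind Theorem 2. -/
lemma core_ineq (ρ yv y'v o Yw Yp c : ℝ) (hρ0 : 0 ≤ ρ) (hρ1 : ρ ≤ 1)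
    (hy0 : 0 ≤ yv) (hy1 : yv ≤ 1) (ho0 : 0 ≤ o) (ho1 : o ≤ 1)
    (hoYP : o ≤ Yw + Yp) (hy' : y'v = 0 ∨ y'v = 1)
    (hc0 : 0 ≤ c) (hc1 : y'v = 0 → 0 < ρ → c = 1) :
    (1 - ρ * y'v) * (1 - Yw - Yp - c * yv) ≤ (1 - o) * (1 - ρ * yv) := by
  rcases hy' with h | h <;> subst h
  · by_cases hρ : 0 < ρ
    · rw [hc1 rfl hρ]
      nlinarith [mul_nonneg hy0 (sub_nonneg.2 hρ1), mul_nonneg (mul_nonneg hρ0 hy0) ho0]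
    · have h0 : ρ = 0 := le_antisymm (not_lt.1 hρ) hρ0
      subst h0
      nlinarith [mul_nonneg hc0 hy0]
  · nlinarith [mul_nonneg (mul_nonneg (sub_nonneg.2 ho1) hρ0) (sub_nonneg.2 hy1),
      mul_nonneg (sub_nonneg.2 hρ1) (mul_nonneg hc0 hy0),
      mul_nonneg (sub_nonneg.2 hρ1) (by linarith : (0:ℝ) ≤ Yw + Yp - o)]

/-- The last capture period before `t` is smaller than `t` (for `t ≥ 1`). -/
lemma lastCap_lt (P : CDFLP I J) (w z : I → ℕ → ℝ) (j : J) {t : ℕ} (ht : 1 ≤ t) :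
    P.lastCap w z j t < t := by
  rw [lastCap, Finset.sup_lt_iff (show (⊥ : ℕ) < t from ht)]
  intro b hb
  exact (Finset.mem_Ico.1 (Finset.mem_filter.1 hb).1).2

/-- **Theorem 2.**  The tightened value-function cut dominates the tailored
value-function cut: for every leader schedule `y`, the tightened bound is at least
the tailored bound. -/
theorem tightened_dominates_tailored (P : CDFLP I J) (hP : P.Valid)
    (y' zs : I → ℕ → ℝ) (hfeas : P.BilevelFeasible y' zs)
    (y : I → ℕ → ℝ) (hy : P.IsSched y) :
    P.tailoredBound y' zs y ≤ P.tightenedBound zs y := by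
  obtain ⟨-, hd, hr, hρ0, hρ1, -⟩ := hP
  obtain ⟨hy'S, hzsS, -⟩ := hfeas
  -- boundedness of the leader schedule on the horizon
  have hyb : ∀ k s, 1 ≤ s → s ≤ P.T → 0 ≤ y k s ∧ y k s ≤ 1 := by
    intro k s h1 h2
    rcases ((hy s h1 h2).1 k) with h | h <;> rw [h] <;> norm_num
  rw [tailoredBound, tightenedBound]
  refine Finset.sum_le_sum fun t ht => ?_
  rw [Finset.mem_Icc] at ht
  obtain ⟨ht1, ht2⟩ := ht
  have swap : ∀ f : ℕ → J → I → ℝ,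
      (∑ ℓ ∈ Finset.range t, ∑ j : J, ∑ i ∈ P.considered j, f ℓ j i)
        = ∑ j : J, ∑ i ∈ P.considered j, ∑ ℓ ∈ Finset.range t, f ℓ j i := by
    intro f
    rw [Finset.sum_comm]
    exact Finset.sum_congr rfl fun j _ => Finset.sum_comm
  rw [swap, swap]
  refine Finset.sum_le_sum fun j _ => Finset.sum_le_sum fun i hi => ?_
  have hyit := hyb i t ht1 ht2
  have h1ρy : 0 ≤ 1 - P.ρ * y i t := by nlinarith [hyit.1, hyit.2]
  -- bounds on oMax
  have ho : ∀ s, 1 ≤ s → 0 ≤ P.oMax y j i s t ∧ P.oMax y j i s t ≤ 1 := by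
    intro s hs
    constructor
    · exact le_max_of_le_left ((Finset.le_fold_max _).2 (Or.inl le_rfl))
    · refine max_le ((Finset.fold_max_le _).2 ⟨zero_le_one, fun p hp => ?_⟩)
        ((Finset.fold_max_le _).2 ⟨zero_le_one, fun k _ => (hyb k t ht1 ht2).2⟩)
      obtain ⟨hp1, -⟩ := Finset.mem_product.1 hp
      rw [Finset.mem_Ico] at hp1
      exact (hyb p.2 p.1 (le_trans hs hp1.1) (le_trans (Nat.le_of_lt hp1.2) ht2)).2
  -- rewriting of the tightened inner factor as a single sum
  have hB : ∀ ℓ : ℕ,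
      P.D j ℓ t - (∑ s ∈ Finset.Icc (ℓ + 1) t, P.d j s * P.oMax y j i s t)
        - P.ρ * y i t * ∑ s ∈ Finset.Icc (ℓ + 1) t, P.d j s * (1 - P.oMax y j i s t)
      = ∑ s ∈ Finset.Icc (ℓ + 1) t,
          P.d j s * ((1 - P.oMax y j i s t) * (1 - P.ρ * y i t)) := by
    intro ℓ
    rw [D, Finset.mul_sum, ← Finset.sum_sub_distrib, ← Finset.sum_sub_distrib]
    exact Finset.sum_congr rfl fun s _ => by ring
  -- nonnegativity of each term of the tightened bound
  have hBnn : ∀ ℓ : ℕ,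
      0 ≤ P.r i * P.v (fun _ _ => 0) zs j i ℓ t *
        (P.D j ℓ t - (∑ s ∈ Finset.Icc (ℓ + 1) t, P.d j s * P.oMax y j i s t)
          - P.ρ * y i t * ∑ s ∈ Finset.Icc (ℓ + 1) t, P.d j s * (1 - P.oMax y j i s t)) := by
    intro ℓ
    have hv0 : 0 ≤ P.v (fun _ _ => 0) zs j i ℓ t := by
      rw [v]; split_ifs <;> norm_num [hρ0]
    refine mul_nonneg (mul_nonneg (hr i) hv0) ?_
    rw [hB]
    refine Finset.sum_nonneg fun s hs => ?_
    have hs1 : 1 ≤ s := le_trans (Nat.le_add_left 1 ℓ) (Finset.mem_Icc.1 hs).1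
    exact mul_nonneg (hd j s)
      (mul_nonneg (by linarith [(ho s hs1).2]) h1ρy)
  set ℓs := P.lastCap y' zs j t with hℓs
  set ℓ0 := P.lastCap (fun _ _ => 0) zs j t with hℓ0
  have hℓslt : ℓs < t := P.lastCap_lt y' zs j ht1
  have hℓ0lt : ℓ0 < t := P.lastCap_lt (fun _ _ => 0) zs j ht1
  -- the tailored sum collapses to the single term at ℓs
  rw [Finset.sum_eq_single_of_mem ℓs (Finset.mem_range.2 hℓslt) (fun ℓ _ hne => by
    have : P.v y' zs j i ℓ t = 0 := if_neg fun h => hne (h.2.1.trans hℓs.symm)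
    rw [this]; ring)]
  -- the tightened sum dominates its single term at ℓ0
  refine le_trans ?_ (Finset.single_le_sum (fun ℓ _ => hBnn ℓ) (Finset.mem_range.2 hℓ0lt))
  -- compare the two remaining terms
  by_cases hC : P.IsCapture y' zs j t ∧ ℓs = P.lastCap y' zs j t ∧
      P.IsPatron y' zs j t i ∧ zs i t = 1
  · have hv : P.v y' zs j i ℓs t = 1 - P.ρ * y' i t := if_pos hC
    have hprefi : P.pref j (some i) none := (Finset.mem_filter.1 hi).2
    have hzit : zs i t = 1 := hC.2.2.2
    have hsub : ∀ s, P.captureSet (fun _ _ => 0) zs j s ⊆ P.captureSet y' zs j s := by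
      intro s k hk
      obtain ⟨-, hk1, hk2⟩ := Finset.mem_filter.1 hk
      refine Finset.mem_filter.2 ⟨Finset.mem_univ _, hk1, Or.inr ?_⟩
      rcases hk2 with h | h
      · norm_num at h
      · exact h
    have hiCap0 : i ∈ P.captureSet (fun _ _ => 0) zs j t :=
      Finset.mem_filter.2 ⟨Finset.mem_univ _, hprefi, Or.inr hzit⟩
    have hCap0 : P.IsCapture (fun _ _ => 0) zs j t := ⟨ht1, ht2, ⟨i, hiCap0⟩⟩
    have hPat0 : P.IsPatron (fun _ _ => 0) zs j t i :=
      ⟨hiCap0, fun k hk hne => hC.2.2.1.2 k (hsub t hk) hne⟩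
    have hv0 : P.v (fun _ _ => 0) zs j i ℓ0 t = 1 := by
      rw [v, if_pos ⟨hCap0, hℓ0, hPat0, hzit⟩]; norm_num
    have hℓ0le : ℓ0 ≤ ℓs := by
      rw [hℓ0, hℓs, lastCap, lastCap]
      refine Finset.sup_mono (Finset.monotone_filter_right _ fun s hs => ?_)
      exact fun hs' => ⟨hs'.1, hs'.2.1, hs'.2.2.mono (hsub s)⟩
    have hy'it : y' i t = 0 ∨ y' i t = 1 := (hy'S t ht1 ht2).1 i
    -- abbreviations for the tailored factor
    set Yw : ℝ := ∑ k ∈ P.considered j, ∑ s ∈ Finset.Ioo ℓs t, y k s with hYw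
    set Yp : ℝ := ∑ k ∈ Finset.univ.filter fun k => P.pref j (some k) (some i), y k t
      with hYp
    have hYwnn : 0 ≤ Yw := by
      refine Finset.sum_nonneg fun k _ => Finset.sum_nonneg fun s hs => ?_
      rw [Finset.mem_Ioo] at hs
      exact (hyb k s (by omega) (le_trans (Nat.le_of_lt hs.2) ht2)).1
    have hYpnn : 0 ≤ Yp :=
      Finset.sum_nonneg fun k _ => (hyb k t ht1 ht2).1
    have hoYP : ∀ s ∈ Finset.Icc (ℓs + 1) t, P.oMax y j i s t ≤ Yw + Yp := by
      intro s hs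
      rw [Finset.mem_Icc] at hs
      refine max_le (le_trans ?_ (le_add_of_nonneg_right hYpnn))
        (le_trans ?_ (le_add_of_nonneg_left hYwnn))
      · refine (Finset.fold_max_le _).2 ⟨hYwnn, fun p hp => ?_⟩
        obtain ⟨hp1, hp2⟩ := Finset.mem_product.1 hp
        rw [Finset.mem_Ico] at hp1
        have hmem : p.1 ∈ Finset.Ioo ℓs t :=
          Finset.mem_Ioo.2 ⟨lt_of_lt_of_le (Nat.lt_of_succ_le hs.1) hp1.1, hp1.2⟩
        have h1 : y p.2 p.1 ≤ ∑ s' ∈ Finset.Ioo ℓs t, y p.2 s' := by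
          refine Finset.single_le_sum (fun s' hs' => ?_) hmem
          rw [Finset.mem_Ioo] at hs'
          exact (hyb p.2 s' (by omega) (le_trans (Nat.le_of_lt hs'.2) ht2)).1
        refine le_trans h1 ?_
        rw [hYw]
        exact Finset.single_le_sum
          (fun k _ => Finset.sum_nonneg fun s' hs' => by
            rw [Finset.mem_Ioo] at hs'
            exact (hyb k s' (by omega) (le_trans (Nat.le_of_lt hs'.2) ht2)).1) hp2
      · refine (Finset.fold_max_le _).2 ⟨hYpnn, fun k hk => ?_⟩
        rw [hYp]
        exact Finset.single_le_sum (fun k' _ => (hyb k' t ht1 ht2).1) hk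
    -- the key chain of inequalities on the demand sums
    rw [hv, hv0, hB ℓ0, mul_one]
    set c : ℝ := if 1 - P.ρ * y' i t = 1 ∧ 0 < P.ρ then 1 else 0 with hc
    have hc0 : 0 ≤ c := by rw [hc]; split_ifs <;> norm_num
    have hc1 : y' i t = 0 → 0 < P.ρ → c = 1 := by
      intro h0 hρ
      rw [hc, if_pos ⟨by rw [h0]; ring, hρ⟩]
    set E : ℝ := 1 - Yw - Yp - c * y i t with hE
    have key : P.D j ℓs t * ((1 - P.ρ * y' i t) * E)
        ≤ ∑ s ∈ Finset.Icc (ℓ0 + 1) t,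
            P.d j s * ((1 - P.oMax y j i s t) * (1 - P.ρ * y i t)) := by
      rw [D, Finset.sum_mul]
      refine le_trans (Finset.sum_le_sum fun s hs => ?_)
        (Finset.sum_le_sum_of_subset_of_nonneg
          (Finset.Icc_subset_Icc_left (by omega)) (fun s hs _ => ?_))
      · have hs1 : 1 ≤ s := le_trans (Nat.le_add_left 1 ℓs) (Finset.mem_Icc.1 hs).1
        refine mul_le_mul_of_nonneg_left ?_ (hd j s)
        exact core_ineq P.ρ (y i t) (y' i t) (P.oMax y j i s t) Yw Yp c hρ0 hρ1
          hyit.1 hyit.2 (ho s hs1).1 (ho s hs1).2 (hoYP s hs) hy'it hc0 hc1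
      · have hs1 : 1 ≤ s := le_trans (Nat.le_add_left 1 ℓ0) (Finset.mem_Icc.1 hs).1
        exact mul_nonneg (hd j s)
          (mul_nonneg (by linarith [(ho s hs1).2]) h1ρy)
    calc P.r i * P.D j ℓs t * (1 - P.ρ * y' i t) * E
        = P.r i * (P.D j ℓs t * ((1 - P.ρ * y' i t) * E)) := by ring
      _ ≤ P.r i * ∑ s ∈ Finset.Icc (ℓ0 + 1) t,
            P.d j s * ((1 - P.oMax y j i s t) * (1 - P.ρ * y i t)) :=
          mul_le_mul_of_nonneg_left key (hr i)
  · have hv : P.v y' zs j i ℓs t = 0 := if_neg hC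
    rw [hv]
    calc P.r i * P.D j ℓs t * 0 * _ = 0 := by ring
      _ ≤ _ := hBnn ℓ0

end CDFLP
end

section
/- Validity of both value-function cuts for the pessimistic variant (Corollary 1 of the paper): let (y′,z*) be a bilevel feasible pair, let Φ_tail be the tailored value-function bound built from (y′,z*), and let Φ_tight be the tightened value-function bound of z*. Then every pessimistically bilevel feasible pair (y,z) satisfies both π^F(y,z) ≥ Φ_tail(y) and π^F(y,z) ≥ Φ_tight(y). -/
open Finset

attribute [local instance] Classical.propDecidable

namespace CDFLP

variable {I J : Type*} [Fintype I] [Fintype J]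

/-- `z` is an optimal reaction of the follower against `y`, i.e. `z ∈ F(y)`. -/
def FollowerOpt (P : CDFLP I J) (y z : I → ℕ → ℝ) : Prop :=
  P.IsSched z ∧ ∀ z', P.IsSched z' → P.profitF y z' ≤ P.profitF y z

/-- `(y,z)` is pessimistically bilevel feasible: `z ∈ F(y)` and `z` minimizes the
leader's profit among the optimal follower reactions. -/
def PessFeasible (P : CDFLP I J) (y z : I → ℕ → ℝ) : Prop :=
  P.IsSched y ∧ P.FollowerOpt y z ∧
    ∀ z', P.FollowerOpt y z' → P.profitL y z ≤ P.profitL y z'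


section Aux

variable {P : CDFLP I J} {y z w : I → ℕ → ℝ} {j : J} {i : I} {ℓ t : ℕ}

lemma sched01 (hw : P.IsSched w) (h1 : 1 ≤ t) (h2 : t ≤ P.T) (i : I) :
    w i t = 0 ∨ w i t = 1 := (hw t h1 h2).1 i

lemma sched_nonneg (hw : P.IsSched w) (h1 : 1 ≤ t) (h2 : t ≤ P.T) (i : I) : 0 ≤ w i t := by
  rcases sched01 hw h1 h2 i with h | h <;> rw [h] <;> norm_num

lemma D_nonneg (hd : ∀ j t, 0 ≤ P.d j t) : 0 ≤ P.D j ℓ t :=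
  Finset.sum_nonneg fun s _ => hd j s

lemma D_mono (hd : ∀ j t, 0 ≤ P.d j t) {ℓ' : ℕ} (h : ℓ' ≤ ℓ) : P.D j ℓ t ≤ P.D j ℓ' t :=
  Finset.sum_le_sum_of_subset_of_nonneg
    (Finset.Icc_subset_Icc (by omega) le_rfl) (fun s _ _ => hd j s)

lemma v_nonneg (hP : P.Valid) (hy : P.IsSched y) : 0 ≤ P.v y z j i ℓ t := by
  unfold v; split
  · rename_i h
    obtain ⟨⟨h1, h2, -⟩, -⟩ := h
    rcases sched01 hy h1 h2 i with h0 | h0 <;> rw [h0]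
    · norm_num
    · nlinarith [hP.2.2.2.2.1]
  · exact le_rfl

lemma v_le_one (hP : P.Valid) (hy : P.IsSched y) : P.v y z j i ℓ t ≤ 1 := by
  unfold v; split
  · rename_i h
    obtain ⟨⟨h1, h2, -⟩, -⟩ := h
    nlinarith [sched_nonneg hy h1 h2 i, hP.2.2.2.1]
  · norm_num

lemma v_ne_zero {y : I → ℕ → ℝ} (h : P.v y z j i ℓ t ≠ 0) :
    P.IsCapture y z j t ∧ ℓ = P.lastCap y z j t ∧ P.IsPatron y z j t i ∧ z i t = 1 ∧
      P.v y z j i ℓ t = 1 - P.ρ * y i t := by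
  unfold v at h ⊢
  split at h
  · rename_i hc; exact ⟨hc.1, hc.2.1, hc.2.2.1, hc.2.2.2, if_pos hc⟩
  · exact absurd rfl h

lemma lastCap_lt_s5 (h1 : 1 ≤ t) : P.lastCap y z j t < t := by
  unfold lastCap
  rw [Finset.sup_lt_iff (show (⊥ : ℕ) < t by simp; omega)]
  intro s hs
  exact (Finset.mem_Ico.1 (Finset.mem_filter.1 hs).1).2

lemma le_lastCap {s : ℕ} (hs : s ∈ Finset.Ico 1 t) (hc : P.IsCapture y z j s) :
    s ≤ P.lastCap y z j t :=
  Finset.le_sup (f := id) (Finset.mem_filter.2 ⟨hs, hc⟩)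

lemma patron_unique (hP : P.Valid) {i' : I} (h1 : P.IsPatron y z j t i)
    (h2 : P.IsPatron y z j t i') : i = i' := by
  by_contra hne
  have htot := hP.2.2.2.2.2 j
  have a := h1.2 i' h2.1 (fun h => hne h.symm)
  have b := h2.2 i h1.1 hne
  exact htot.irrefl _ (htot.trans _ _ _ a b)

lemma Fterm_nonneg (hP : P.Valid) (hy : P.IsSched y) :
    0 ≤ P.r i * P.D j ℓ t * P.v y z j i ℓ t :=
  mul_nonneg (mul_nonneg (hP.2.2.1 i) (D_nonneg hP.2.1)) (v_nonneg hP hy)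

lemma le_sum2 {f : ℕ → I → ℝ} (hf : ∀ ℓ' ∈ Finset.range t, ∀ i' ∈ P.considered j, 0 ≤ f ℓ' i')
    (hℓ : ℓ ∈ Finset.range t) (hi : i ∈ P.considered j) :
    f ℓ i ≤ ∑ ℓ' ∈ Finset.range t, ∑ i' ∈ P.considered j, f ℓ' i' := by
  calc f ℓ i ≤ ∑ i' ∈ P.considered j, f ℓ i' := Finset.single_le_sum (hf ℓ hℓ) hi
    _ ≤ _ := Finset.single_le_sum
        (fun ℓ' hℓ' => Finset.sum_nonneg (hf ℓ' hℓ')) hℓ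

end Aux

section Main

set_option linter.unusedSectionVars false

variable {P : CDFLP I J} {y' zs y : I → ℕ → ℝ} {j : J} {t : ℕ}

lemma swap_le {f g : ℕ → J → ℝ} {A : Finset ℕ}
    (h : ∀ j : J, ∑ ℓ ∈ A, f ℓ j ≤ ∑ ℓ ∈ A, g ℓ j) :
    ∑ ℓ ∈ A, ∑ j : J, f ℓ j ≤ ∑ ℓ ∈ A, ∑ j : J, g ℓ j := by
  calc ∑ ℓ ∈ A, ∑ j : J, f ℓ j = ∑ j : J, ∑ ℓ ∈ A, f ℓ j := Finset.sum_comm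
    _ ≤ ∑ j : J, ∑ ℓ ∈ A, g ℓ j := Finset.sum_le_sum fun j _ => h j
    _ = ∑ ℓ ∈ A, ∑ j : J, g ℓ j := Finset.sum_comm

lemma mem_captureSet {w z : I → ℕ → ℝ} {i : I} (hp : P.pref j (some i) none)
    (h : w i t = 1 ∨ z i t = 1) : i ∈ P.captureSet w z j t := by
  simp only [captureSet, Finset.mem_filter, Finset.mem_univ, true_and]
  exact ⟨hp, h⟩

lemma considered_pref {i : I} (hi : i ∈ P.considered j) : P.pref j (some i) none := by
  simpa only [considered, Finset.mem_filter, Finset.mem_univ, true_and] using hi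

/-- Core per-period inequality for the tailored bound. -/
lemma tailored_core (hP : P.Valid) (hy' : P.IsSched y') (hzs : P.IsSched zs)
    (hy : P.IsSched y) (ht1 : 1 ≤ t) (ht2 : t ≤ P.T) (j : J) :
    (∑ ℓ ∈ Finset.range t, ∑ i ∈ P.considered j,
      P.r i * P.D j ℓ t * P.v y' zs j i ℓ t *
        (1 - (∑ k ∈ P.considered j, ∑ s ∈ Finset.Ioo ℓ t, y k s)
           - (∑ k ∈ Finset.univ.filter fun k => P.pref j (some k) (some i), y k t)
           - (if P.v y' zs j i ℓ t = 1 ∧ 0 < P.ρ then 1 else 0) * y i t))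
    ≤ ∑ ℓ ∈ Finset.range t, ∑ i ∈ P.considered j,
        P.r i * P.D j ℓ t * P.v y zs j i ℓ t := by
  have hRnn : (0:ℝ) ≤ ∑ ℓ ∈ Finset.range t, ∑ i ∈ P.considered j,
      P.r i * P.D j ℓ t * P.v y zs j i ℓ t :=
    Finset.sum_nonneg fun ℓ _ => Finset.sum_nonneg fun i _ => Fterm_nonneg hP hy
  set ℓ0 := P.lastCap y' zs j t with hℓ0def
  by_cases hex : ∃ i0 ∈ P.considered j, P.v y' zs j i0 ℓ0 t ≠ 0
  · obtain ⟨i0, hi0, hv0⟩ := hex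
    obtain ⟨hcap, -, hpat0, hz0, hveq⟩ := v_ne_zero hv0
    -- collapse the left-hand double sum to the single nonzero term
    refine le_trans (le_of_eq (Finset.sum_eq_single_of_mem ℓ0
        (Finset.mem_range.2 (lastCap_lt_s5 ht1)) ?_)) ?_
    · intro ℓ hℓ hne
      refine Finset.sum_eq_zero fun i hi => ?_
      have hv : P.v y' zs j i ℓ t = 0 := by
        by_contra h; exact hne ((v_ne_zero h).2.1)
      rw [hv]; ring
    refine le_trans (le_of_eq (Finset.sum_eq_single_of_mem i0 hi0 ?_)) ?_
    · intro i hi hne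
      have hv : P.v y' zs j i ℓ0 t = 0 := by
        by_contra h
        exact hne (patron_unique hP (v_ne_zero h).2.2.1 hpat0)
      rw [hv]; ring
    -- name the three subtracted sums
    set S1 := ∑ k ∈ P.considered j, ∑ s ∈ Finset.Ioo ℓ0 t, y k s with hS1def
    set S2 := ∑ k ∈ Finset.univ.filter fun k => P.pref j (some k) (some i0), y k t with hS2def
    set S3 := (if P.v y' zs j i0 ℓ0 t = 1 ∧ 0 < P.ρ then 1 else 0) * y i0 t with hS3def
    have hS1 : (0:ℝ) ≤ S1 := Finset.sum_nonneg fun k _ => Finset.sum_nonneg fun s hs => by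
      have hs' := Finset.mem_Ioo.1 hs
      exact sched_nonneg hy (by omega) (by omega) k
    have hS2 : (0:ℝ) ≤ S2 :=
      Finset.sum_nonneg fun k _ => sched_nonneg hy ht1 ht2 k
    have hS3 : (0:ℝ) ≤ S3 := by
      rw [hS3def]
      refine mul_nonneg ?_ (sched_nonneg hy ht1 ht2 i0)
      split <;> norm_num
    have hv0nn : 0 ≤ P.v y' zs j i0 ℓ0 t := v_nonneg hP hy'
    have hv0le : P.v y' zs j i0 ℓ0 t ≤ 1 := v_le_one hP hy'
    by_cases hB : 1 - S1 - S2 - S3 ≤ 0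
    · refine le_trans ?_ hRnn
      have h1 : 0 ≤ P.r i0 * P.D j ℓ0 t * P.v y' zs j i0 ℓ0 t :=
        Fterm_nonneg hP hy'
      nlinarith
    push_neg at hB
    -- extract the vanishing of y on the relevant region
    have ha : ∀ k ∈ P.considered j, ∀ s ∈ Finset.Ioo ℓ0 t, y k s = 0 := by
      intro k hk s hs
      have hs' := Finset.mem_Ioo.1 hs
      rcases sched01 (t := s) hy (by omega) (by omega) k with h | h
      · exact h
      · exfalso
        have h1 : (1:ℝ) ≤ S1 := by
          calc (1:ℝ) = y k s := h.symm
            _ ≤ ∑ s' ∈ Finset.Ioo ℓ0 t, y k s' := Finset.single_le_sum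
                (fun s' hs'' => by
                  have := Finset.mem_Ioo.1 hs''
                  exact sched_nonneg hy (by omega) (by omega) k) hs
            _ ≤ S1 := Finset.single_le_sum
                (fun k' _ => Finset.sum_nonneg fun s' hs'' => by
                  have := Finset.mem_Ioo.1 hs''
                  exact sched_nonneg hy (by omega) (by omega) k') hk
        linarith
    have hb : ∀ k : I, P.pref j (some k) (some i0) → y k t = 0 := by
      intro k hkp
      rcases sched01 hy ht1 ht2 k with h | h
      · exact h
      · exfalso
        have h1 : (1:ℝ) ≤ S2 := by
          calc (1:ℝ) = y k t := h.symm
            _ ≤ S2 := Finset.single_le_sum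
                (fun k' _ => sched_nonneg hy ht1 ht2 k')
                (Finset.mem_filter.2 ⟨Finset.mem_univ _, hkp⟩)
        linarith
    have hcρ : (P.v y' zs j i0 ℓ0 t = 1 ∧ 0 < P.ρ) → y i0 t = 0 := by
      intro h
      rcases sched01 hy ht1 ht2 i0 with h0 | h0
      · exact h0
      · exfalso
        have : S3 = 1 := by rw [hS3def, if_pos h, h0, one_mul]
        linarith
    -- capture and patronage under (y, zs)
    have hi0p : P.pref j (some i0) none := considered_pref hi0
    have hmem : i0 ∈ P.captureSet y zs j t := mem_captureSet hi0p (Or.inr hz0)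
    have hcap' : P.IsCapture y zs j t := ⟨ht1, ht2, ⟨i0, hmem⟩⟩
    have htot := hP.2.2.2.2.2 j
    have hpat' : P.IsPatron y zs j t i0 := by
      refine ⟨hmem, fun k hk hkne => ?_⟩
      simp only [captureSet, Finset.mem_filter, Finset.mem_univ, true_and] at hk
      obtain ⟨hkp, hor⟩ := hk
      rcases hor with hyk | hzk
      · rcases (by have h3 := htot.trichotomous (some i0) (some k); tauto : P.pref j (some i0) (some k) ∨ some i0 = some k ∨ P.pref j (some k) (some i0)) with h | h | h
        · exact h
        · exact absurd (Option.some.inj h).symm hkne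
        · exact absurd (hb k h) (by rw [hyk]; norm_num)
      · exact hpat0.2 k (mem_captureSet hkp (Or.inr hzk)) hkne
    -- the last capture period under (y, zs) is at most ℓ0
    have hℓ'le : P.lastCap y zs j t ≤ ℓ0 := by
      apply Finset.sup_le
      intro s hsf
      show s ≤ ℓ0
      obtain ⟨hsi, hsc⟩ := Finset.mem_filter.1 hsf
      obtain ⟨hs1, hst⟩ := Finset.mem_Ico.1 hsi
      by_contra hgt
      push_neg at hgt
      obtain ⟨-, -, k, hkmem⟩ := hsc
      simp only [captureSet, Finset.mem_filter, Finset.mem_univ, true_and] at hkmem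
      obtain ⟨hkp, hor⟩ := hkmem
      have hkc : k ∈ P.considered j := by
        simp only [considered, Finset.mem_filter, Finset.mem_univ, true_and]
        exact hkp
      rcases hor with hyk | hzk
      · exact absurd (ha k hkc s (Finset.mem_Ioo.2 ⟨hgt, hst⟩)) (by rw [hyk]; norm_num)
      · have hsle : s ≤ ℓ0 := le_lastCap (Finset.mem_Ico.2 ⟨hs1, hst⟩)
          ⟨hs1, by omega, ⟨k, mem_captureSet hkp (Or.inr hzk)⟩⟩
        omega
    have hvy : P.v y zs j i0 (P.lastCap y zs j t) t = 1 - P.ρ * y i0 t := by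
      unfold v
      rw [if_pos ⟨hcap', rfl, hpat', hz0⟩]
    have hw : 0 ≤ 1 - P.ρ * y i0 t := by
      rw [← hvy]; exact v_nonneg hP hy
    -- the key numeric inequality
    have hkey : P.v y' zs j i0 ℓ0 t * (1 - S1 - S2 - S3) ≤ 1 - P.ρ * y i0 t := by
      have hBle1 : 1 - S1 - S2 - S3 ≤ 1 := by linarith
      rcases sched01 hy ht1 ht2 i0 with h0 | h0
      · rw [h0, mul_zero, sub_zero]
        nlinarith
      · rw [h0, mul_one]
        by_cases hρ : 0 < P.ρ
        · have hv0ne : P.v y' zs j i0 ℓ0 t ≠ 1 := by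
            intro h1
            have := hcρ ⟨h1, hρ⟩
            rw [this] at h0; norm_num at h0
          have hy'1 : y' i0 t = 1 := by
            rcases sched01 hy' ht1 ht2 i0 with h | h
            · exfalso; apply hv0ne; rw [hveq, h, mul_zero, sub_zero]
            · exact h
          have hveq' : P.v y' zs j i0 ℓ0 t = 1 - P.ρ := by
            rw [hveq, hy'1, mul_one]
          rw [hveq']
          nlinarith [hP.2.2.2.2.1]
        · have hρ0 : P.ρ = 0 := le_antisymm (not_lt.1 hρ) hP.2.2.2.1
          rw [hρ0]
          nlinarith
    -- conclude
    calc P.r i0 * P.D j ℓ0 t * P.v y' zs j i0 ℓ0 t * (1 - S1 - S2 - S3)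
        = P.r i0 * (P.D j ℓ0 t * (P.v y' zs j i0 ℓ0 t * (1 - S1 - S2 - S3))) := by ring
      _ ≤ P.r i0 * (P.D j ℓ0 t * (1 - P.ρ * y i0 t)) := by
          refine mul_le_mul_of_nonneg_left ?_ (hP.2.2.1 i0)
          exact mul_le_mul_of_nonneg_left hkey (D_nonneg hP.2.1)
      _ ≤ P.r i0 * (P.D j (P.lastCap y zs j t) t * (1 - P.ρ * y i0 t)) := by
          refine mul_le_mul_of_nonneg_left ?_ (hP.2.2.1 i0)
          exact mul_le_mul_of_nonneg_right (D_mono hP.2.1 hℓ'le) hw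
      _ = P.r i0 * P.D j (P.lastCap y zs j t) t *
            P.v y zs j i0 (P.lastCap y zs j t) t := by rw [hvy]; ring
      _ ≤ _ := le_sum2
          (f := fun ℓ' i' => P.r i' * P.D j ℓ' t * P.v y zs j i' ℓ' t)
          (fun ℓ' _ i' _ => Fterm_nonneg hP hy)
          (Finset.mem_range.2 (lastCap_lt_s5 ht1)) hi0
  · -- no nonzero reference term: the left-hand side vanishes
    push_neg at hex
    refine le_trans (le_of_eq (Finset.sum_eq_zero fun ℓ _ =>
      Finset.sum_eq_zero fun i hi => ?_)) hRnn
    have hv : P.v y' zs j i ℓ t = 0 := by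
      by_cases hℓ : ℓ = ℓ0
      · subst hℓ; exact hex i hi
      · by_contra h; exact hℓ ((v_ne_zero h).2.1)
    rw [hv]; ring

/-- Core per-period inequality for the tightened bound. -/
lemma tightened_core (hP : P.Valid) (hzs : P.IsSched zs)
    (hy : P.IsSched y) (ht1 : 1 ≤ t) (ht2 : t ≤ P.T) (j : J) :
    (∑ ℓ ∈ Finset.range t, ∑ i ∈ P.considered j,
      P.r i * P.v (fun _ _ => 0) zs j i ℓ t *
        (P.D j ℓ t - (∑ s ∈ Finset.Icc (ℓ + 1) t, P.d j s * P.oMax y j i s t)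
          - P.ρ * y i t * ∑ s ∈ Finset.Icc (ℓ + 1) t, P.d j s * (1 - P.oMax y j i s t)))
    ≤ ∑ ℓ ∈ Finset.range t, ∑ i ∈ P.considered j,
        P.r i * P.D j ℓ t * P.v y zs j i ℓ t := by
  have hRnn : (0:ℝ) ≤ ∑ ℓ ∈ Finset.range t, ∑ i ∈ P.considered j,
      P.r i * P.D j ℓ t * P.v y zs j i ℓ t :=
    Finset.sum_nonneg fun ℓ _ => Finset.sum_nonneg fun i _ => Fterm_nonneg hP hy
  have hzero : P.IsSched (fun _ _ => (0:ℝ)) := by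
    intro s h1 h2
    refine ⟨fun i => Or.inl rfl, ?_⟩
    simp
  set ℓ0 := P.lastCap (fun _ _ => 0) zs j t with hℓ0def
  by_cases hex : ∃ i0 ∈ P.considered j, P.v (fun _ _ => 0) zs j i0 ℓ0 t ≠ 0
  · obtain ⟨i0, hi0, hv0⟩ := hex
    obtain ⟨hcap, -, hpat0, hz0, hveq⟩ := v_ne_zero hv0
    have hveq1 : P.v (fun _ _ => 0) zs j i0 ℓ0 t = 1 := by
      rw [hveq]; norm_num
    -- collapse the left-hand double sum to the single nonzero term
    refine le_trans (le_of_eq (Finset.sum_eq_single_of_mem ℓ0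
        (Finset.mem_range.2 (lastCap_lt_s5 ht1)) ?_)) ?_
    · intro ℓ hℓ hne
      refine Finset.sum_eq_zero fun i hi => ?_
      have hv : P.v (fun _ _ => 0) zs j i ℓ t = 0 := by
        by_contra h; exact hne ((v_ne_zero h).2.1)
      rw [hv]; ring
    refine le_trans (le_of_eq (Finset.sum_eq_single_of_mem i0 hi0 ?_)) ?_
    · intro i hi hne
      have hv : P.v (fun _ _ => 0) zs j i ℓ0 t = 0 := by
        by_contra h
        exact hne (patron_unique hP (v_ne_zero h).2.2.1 hpat0)
      rw [hv]; ring
    -- basic facts about the interception levels `o`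
    have o_nn : ∀ s, 0 ≤ P.oMax y j i0 s t := fun s =>
      le_trans ((Finset.le_fold_max _).2 (Or.inl le_rfl)) (le_max_left _ _)
    have o_ge_y : ∀ s s' k, s ≤ s' → s' < t → k ∈ P.considered j →
        y k s' ≤ P.oMax y j i0 s t := by
      intro s s' k hss' hs't hk
      refine le_trans ((Finset.le_fold_max _).2 (Or.inr ⟨(s', k), ?_, le_rfl⟩)) (le_max_left _ _)
      exact Finset.mem_product.2 ⟨Finset.mem_Ico.2 ⟨hss', hs't⟩, hk⟩
    have o_ge_yt : ∀ s k, P.pref j (some k) (some i0) →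
        y k t ≤ P.oMax y j i0 s t := by
      intro s k hkp
      refine le_trans ((Finset.le_fold_max _).2 (Or.inr ⟨k, ?_, le_rfl⟩)) (le_max_right _ _)
      exact Finset.mem_filter.2 ⟨Finset.mem_univ _, hkp⟩
    have hw : 0 ≤ 1 - P.ρ * y i0 t := by
      rcases sched01 hy ht1 ht2 i0 with h0 | h0 <;> rw [h0]
      · norm_num
      · nlinarith [hP.2.2.2.2.1]
    -- factor the bracket
    have hC : P.D j ℓ0 t - (∑ s ∈ Finset.Icc (ℓ0 + 1) t, P.d j s * P.oMax y j i0 s t)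
          - P.ρ * y i0 t * ∑ s ∈ Finset.Icc (ℓ0 + 1) t, P.d j s * (1 - P.oMax y j i0 s t)
        = (1 - P.ρ * y i0 t) *
            ∑ s ∈ Finset.Icc (ℓ0 + 1) t, P.d j s * (1 - P.oMax y j i0 s t) := by
      have h1 : P.D j ℓ0 t - (∑ s ∈ Finset.Icc (ℓ0 + 1) t, P.d j s * P.oMax y j i0 s t)
          = ∑ s ∈ Finset.Icc (ℓ0 + 1) t, P.d j s * (1 - P.oMax y j i0 s t) := by
        unfold D
        rw [← Finset.sum_sub_distrib]
        exact Finset.sum_congr rfl fun s _ => by ring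
      rw [h1]; ring
    rw [hveq1, hC, mul_one]
    by_cases hex2 : ∃ s1 ∈ Finset.Icc (ℓ0 + 1) t, P.oMax y j i0 s1 t < 1
    · obtain ⟨s1, hs1, ho1⟩ := hex2
      -- every location preferred to i0 is closed by the leader at t
      have hbt : ∀ k : I, P.pref j (some k) (some i0) → y k t = 0 := by
        intro k hkp
        rcases sched01 hy ht1 ht2 k with h | h
        · exact h
        · exfalso
          have := o_ge_yt s1 k hkp
          rw [h] at this; linarith
      -- capture and patronage under (y, zs)
      have hi0p : P.pref j (some i0) none := considered_pref hi0
      have hmem : i0 ∈ P.captureSet y zs j t := mem_captureSet hi0p (Or.inr hz0)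
      have hcap' : P.IsCapture y zs j t := ⟨ht1, ht2, ⟨i0, hmem⟩⟩
      have htot := hP.2.2.2.2.2 j
      have hpat' : P.IsPatron y zs j t i0 := by
        refine ⟨hmem, fun k hk hkne => ?_⟩
        simp only [captureSet, Finset.mem_filter, Finset.mem_univ, true_and] at hk
        obtain ⟨hkp, hor⟩ := hk
        rcases hor with hyk | hzk
        · rcases (by have h3 := htot.trichotomous (some i0) (some k); tauto : P.pref j (some i0) (some k) ∨ some i0 = some k ∨ P.pref j (some k) (some i0)) with h | h | h
          · exact h
          · exact absurd (Option.some.inj h).symm hkne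
          · exact absurd (hbt k h) (by rw [hyk]; norm_num)
        · exact hpat0.2 k (mem_captureSet hkp (Or.inr hzk)) hkne
      have hvy : P.v y zs j i0 (P.lastCap y zs j t) t = 1 - P.ρ * y i0 t := by
        unfold v
        rw [if_pos ⟨hcap', rfl, hpat', hz0⟩]
      -- periods not intercepted lie strictly after the last capture period
      have hafter : ∀ s ∈ Finset.Icc (ℓ0 + 1) t, P.oMax y j i0 s t < 1 →
          P.lastCap y zs j t < s := by
        intro s hs ho
        obtain ⟨hsl, hsu⟩ := Finset.mem_Icc.1 hs
        unfold lastCap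
        rw [Finset.sup_lt_iff (show (⊥ : ℕ) < s by simp; omega)]
        intro p hpf
        show p < s
        obtain ⟨hpi, hpc⟩ := Finset.mem_filter.1 hpf
        obtain ⟨hp1, hpt⟩ := Finset.mem_Ico.1 hpi
        by_contra hps
        push_neg at hps
        obtain ⟨-, -, k, hkmem⟩ := hpc
        simp only [captureSet, Finset.mem_filter, Finset.mem_univ, true_and] at hkmem
        obtain ⟨hkp, hor⟩ := hkmem
        have hkc : k ∈ P.considered j := by
          simp only [considered, Finset.mem_filter, Finset.mem_univ, true_and]
          exact hkp
        rcases hor with hyk | hzk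
        · have := o_ge_y s p k hps hpt hkc
          rw [hyk] at this; linarith
        · have hple : p ≤ ℓ0 := le_lastCap (Finset.mem_Ico.2 ⟨hp1, hpt⟩)
            ⟨hp1, by omega, ⟨k, mem_captureSet hkp (Or.inr hzk)⟩⟩
          omega
      -- the surviving demand is dominated by the demand of the (y, zs) interval
      have hkey : (∑ s ∈ Finset.Icc (ℓ0 + 1) t, P.d j s * (1 - P.oMax y j i0 s t))
          ≤ P.D j (P.lastCap y zs j t) t := by
        have hsplit := Finset.sum_filter_add_sum_filter_not (Finset.Icc (ℓ0 + 1) t)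
          (fun s => P.oMax y j i0 s t < 1)
          (fun s => P.d j s * (1 - P.oMax y j i0 s t))
        have hnot : (∑ s ∈ (Finset.Icc (ℓ0 + 1) t).filter
            (fun s => ¬ P.oMax y j i0 s t < 1),
              P.d j s * (1 - P.oMax y j i0 s t)) ≤ 0 := by
          refine Finset.sum_nonpos fun s hs => ?_
          have ho := not_lt.1 (Finset.mem_filter.1 hs).2
          have hd := hP.2.1 j s
          nlinarith
        have h2 : (∑ s ∈ (Finset.Icc (ℓ0 + 1) t).filter
            (fun s => P.oMax y j i0 s t < 1),
              P.d j s * (1 - P.oMax y j i0 s t))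
            ≤ ∑ s ∈ (Finset.Icc (ℓ0 + 1) t).filter
                (fun s => P.oMax y j i0 s t < 1), P.d j s := by
          refine Finset.sum_le_sum fun s hs => ?_
          have := o_nn s
          have hd := hP.2.1 j s
          nlinarith
        have h3 : (∑ s ∈ (Finset.Icc (ℓ0 + 1) t).filter
            (fun s => P.oMax y j i0 s t < 1), P.d j s)
            ≤ P.D j (P.lastCap y zs j t) t := by
          refine Finset.sum_le_sum_of_subset_of_nonneg ?_ (fun s _ _ => hP.2.1 j s)
          intro s hs
          obtain ⟨hsi, hso⟩ := Finset.mem_filter.1 hs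
          have := hafter s hsi hso
          have := Finset.mem_Icc.1 hsi
          exact Finset.mem_Icc.2 ⟨by omega, this.2⟩
        linarith
      calc P.r i0 * ((1 - P.ρ * y i0 t) *
              ∑ s ∈ Finset.Icc (ℓ0 + 1) t, P.d j s * (1 - P.oMax y j i0 s t))
          ≤ P.r i0 * ((1 - P.ρ * y i0 t) * P.D j (P.lastCap y zs j t) t) := by
            refine mul_le_mul_of_nonneg_left ?_ (hP.2.2.1 i0)
            exact mul_le_mul_of_nonneg_left hkey hw
        _ = P.r i0 * P.D j (P.lastCap y zs j t) t *
              P.v y zs j i0 (P.lastCap y zs j t) t := by rw [hvy]; ring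
        _ ≤ _ := le_sum2
            (f := fun ℓ' i' => P.r i' * P.D j ℓ' t * P.v y zs j i' ℓ' t)
            (fun ℓ' _ i' _ => Fterm_nonneg hP hy)
            (Finset.mem_range.2 (lastCap_lt_s5 ht1)) hi0
    · -- all spawned demand is intercepted: the term is nonpositive
      push_neg at hex2
      refine le_trans ?_ hRnn
      have hsum : (∑ s ∈ Finset.Icc (ℓ0 + 1) t, P.d j s * (1 - P.oMax y j i0 s t)) ≤ 0 := by
        refine Finset.sum_nonpos fun s hs => ?_
        have ho := hex2 s hs
        have hd := hP.2.1 j s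
        nlinarith
      have h1 : (1 - P.ρ * y i0 t) *
          (∑ s ∈ Finset.Icc (ℓ0 + 1) t, P.d j s * (1 - P.oMax y j i0 s t)) ≤ 0 := by
        nlinarith [mul_nonneg hw (neg_nonneg.2 hsum)]
      nlinarith [mul_nonneg (hP.2.2.1 i0) (neg_nonneg.2 h1)]
  · -- no nonzero reference term: the left-hand side vanishes
    push_neg at hex
    refine le_trans (le_of_eq (Finset.sum_eq_zero fun ℓ _ =>
      Finset.sum_eq_zero fun i hi => ?_)) hRnn
    have hv : P.v (fun _ _ => 0) zs j i ℓ t = 0 := by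
      by_cases hℓ : ℓ = ℓ0
      · subst hℓ; exact hex i hi
      · by_contra h; exact hℓ ((v_ne_zero h).2.1)
    rw [hv]; ring

lemma tailored_le (hP : P.Valid) (hy' : P.IsSched y') (hzs : P.IsSched zs)
    (hy : P.IsSched y) : P.tailoredBound y' zs y ≤ P.profitF y zs := by
  unfold tailoredBound profitF
  refine Finset.sum_le_sum fun t ht => ?_
  obtain ⟨ht1, ht2⟩ := Finset.mem_Icc.1 ht
  exact swap_le fun j => tailored_core hP hy' hzs hy ht1 ht2 j

lemma tightened_le (hP : P.Valid) (hzs : P.IsSched zs)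
    (hy : P.IsSched y) : P.tightenedBound zs y ≤ P.profitF y zs := by
  unfold tightenedBound profitF
  refine Finset.sum_le_sum fun t ht => ?_
  obtain ⟨ht1, ht2⟩ := Finset.mem_Icc.1 ht
  exact swap_le fun j => tightened_core hP hzs hy ht1 ht2 j

end Main
/-- **Corollary 1.**  Both the tailored and the tightened value-function cuts, built
from a bilevel feasible pair `(y', zs)`, hold for every pessimistically bilevel
feasible pair `(y, z)`. -/
theorem cuts_valid_pessimistic (P : CDFLP I J) (hP : P.Valid)
    (y' zs : I → ℕ → ℝ) (hfeas : P.BilevelFeasible y' zs)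
    (y z : I → ℕ → ℝ) (hyz : P.PessFeasible y z) :
    P.tailoredBound y' zs y ≤ P.profitF y z ∧ P.tightenedBound zs y ≤ P.profitF y z := by
  obtain ⟨hy', hzs, -⟩ := hfeas
  obtain ⟨hy, ⟨hzsched, hopt⟩, -⟩ := hyz
  have hzz : P.profitF y zs ≤ P.profitF y z := hopt zs hzs
  exact ⟨le_trans (tailored_le hP hy' hzs hy) hzz,
         le_trans (tightened_le hP hzs hy) hzz⟩

end CDFLP
end
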